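/- For every real z ∈ (0,1), the identity 2·𝔑_h(z) − 𝔓_h(z) − 𝔓_hv(z) = (√3/(2π)) · log(1/(1−z)) holds. -/

import Mathlib

open scoped BigOperators

/-- Rising factorial (Pochhammer symbol) `(x)_k = x(x+1)⋯(x+k-1)`. -/
noncomputable def pochR (x : ℝ) (k : ℕ) : ℝ := ∏ i ∈ Finset.range k, (x + i)

/-- The Gauss hypergeometric series `₂F₁(a,b;c;z)`. -/
noncomputable def F21R (a b c z : ℝ) : ℝ :=
  ∑' k : ℕ, pochR a k * pochR b k / (pochR c k * (Nat.factorial k : ℝ)) * z ^ k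

/-- The generalized hypergeometric series `₃F₂(a₁,a₂,a₃;b₁,b₂;z)`. -/
noncomputable def F32R (a₁ a₂ a₃ b₁ b₂ z : ℝ) : ℝ :=
  ∑' k : ℕ, pochR a₁ k * pochR a₂ k * pochR a₃ k /
      (pochR b₁ k * pochR b₂ k * (Nat.factorial k : ℝ)) * z ^ k

/-- Cardy's horizontal crossing function `𝔓_h`. -/
noncomputable def Ph (z : ℝ) : ℝ :=
  3 * Real.Gamma (2/3) / (Real.Gamma (1/3)) ^ 2 * z ^ ((1:ℝ)/3) *
    F21R (1/3) (2/3) (4/3) z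

/-- Watts's horizontal-vertical crossing function `𝔓_hv`. -/
noncomputable def Phv (z : ℝ) : ℝ :=
  Ph z - Real.sqrt 3 / (2 * Real.pi) * z * F32R 1 1 (4/3) 2 (5/3) z

/-- Cardy's cluster-number function `𝔑_h`. -/
noncomputable def Nh (z : ℝ) : ℝ :=
  1/2 - Real.sqrt 3 / (4 * Real.pi) *
    (Real.log (1 - z) + (1 - z) * F32R 1 1 (4/3) 2 (5/3) (1 - z))

namespace Aux1
open Real Set Filter

lemma pochR_zero (x : ℝ) : pochR x 0 = 1 := by simp [pochR]

lemma pochR_succ (x : ℝ) (k : ℕ) : pochR x (k+1) = pochR x k * (x + k) := by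
  simp [pochR, Finset.prod_range_succ]

lemma pochR_shift (x : ℝ) (k : ℕ) : pochR x (k+1) = x * pochR (x+1) k := by
  induction k with
  | zero => simp [pochR]
  | succ n ih =>
      rw [pochR_succ, ih, pochR_succ]
      push_cast; ring

lemma pochR_pos {x : ℝ} (hx : 0 < x) (k : ℕ) : 0 < pochR x k := by
  induction k with
  | zero => simp [pochR_zero]
  | succ n ih => rw [pochR_succ]; positivity

lemma pochR_nonneg {x : ℝ} (hx : 0 < x) (k : ℕ) : 0 ≤ pochR x k := (pochR_pos hx k).le

lemma pochR_mono {x y : ℝ} (hx : 0 < x) (hxy : x ≤ y) (k : ℕ) : pochR x k ≤ pochR y k := by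
  induction k with
  | zero => simp [pochR_zero]
  | succ n ih =>
      rw [pochR_succ, pochR_succ]
      have h1 : (0:ℝ) ≤ x + n := by positivity
      have := pochR_nonneg hx n
      nlinarith [pochR_pos (lt_of_lt_of_le hx hxy) n]

lemma pochR_one (k : ℕ) : pochR 1 k = (Nat.factorial k : ℝ) := by
  induction k with
  | zero => simp [pochR_zero]
  | succ n ih => rw [pochR_succ, ih, Nat.factorial_succ]; push_cast; ring

lemma pochR_two (k : ℕ) : pochR 2 k = (Nat.factorial (k+1) : ℝ) := by
  induction k with
  | zero => simp [pochR_zero]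
  | succ n ih =>
      rw [pochR_succ, ih]
      have h : Nat.factorial (n+1+1) = (n+2) * Nat.factorial (n+1) := Nat.factorial_succ (n+1)
      rw [h]
      push_cast; ring

/-- coefficients of ₂F₁(1/3,2/3;4/3) -/
noncomputable def cc (k : ℕ) : ℝ :=
  pochR (1/3) k * pochR (2/3) k / (pochR (4/3) k * (Nat.factorial k : ℝ))

/-- coefficients of binomial series (1-z)^(-2/3) -/
noncomputable def bb (k : ℕ) : ℝ := pochR (2/3) k / (Nat.factorial k : ℝ)

/-- coefficients of ₂F₁(1,4/3;5/3) -/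
noncomputable def ee (k : ℕ) : ℝ := pochR (4/3) k / pochR (5/3) k

/-- coefficients of ₃F₂(1,1,4/3;2,5/3) -/
noncomputable def dd (k : ℕ) : ℝ :=
  pochR 1 k * pochR 1 k * pochR (4/3) k /
    (pochR 2 k * pochR (5/3) k * (Nat.factorial k : ℝ))

lemma fact_pos' (k : ℕ) : (0:ℝ) < (Nat.factorial k : ℝ) := by
  exact_mod_cast Nat.factorial_pos k

lemma cc_nonneg (k : ℕ) : 0 ≤ cc k := by
  unfold cc
  have := pochR_pos (by norm_num : (0:ℝ) < 1/3) k
  have := pochR_pos (by norm_num : (0:ℝ) < 2/3) k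
  have := pochR_pos (by norm_num : (0:ℝ) < 4/3) k
  have := fact_pos' k
  positivity

lemma cc_le_one (k : ℕ) : cc k ≤ 1 := by
  unfold cc
  have hp4 := pochR_pos (by norm_num : (0:ℝ) < 4/3) k
  have hf := fact_pos' k
  rw [div_le_one (by positivity)]
  have h1 : pochR (1/3) k ≤ (Nat.factorial k : ℝ) := by
    rw [← pochR_one]; exact pochR_mono (by norm_num) (by norm_num) k
  have h2 : pochR (2/3) k ≤ pochR (4/3) k := pochR_mono (by norm_num) (by norm_num) k
  calc pochR (1/3) k * pochR (2/3) k ≤ (Nat.factorial k : ℝ) * pochR (4/3) k := by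
        apply mul_le_mul h1 h2 (pochR_nonneg (by norm_num) k) (by positivity)
    _ = pochR (4/3) k * (Nat.factorial k : ℝ) := by ring

lemma bb_nonneg (k : ℕ) : 0 ≤ bb k := by
  unfold bb
  have := pochR_pos (by norm_num : (0:ℝ) < 2/3) k
  have := fact_pos' k
  positivity

lemma bb_le_one (k : ℕ) : bb k ≤ 1 := by
  unfold bb
  rw [div_le_one (fact_pos' k), ← pochR_one]
  exact pochR_mono (by norm_num) (by norm_num) k

lemma ee_nonneg (k : ℕ) : 0 ≤ ee k := by
  unfold ee
  have := pochR_pos (by norm_num : (0:ℝ) < 4/3) k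
  have := pochR_pos (by norm_num : (0:ℝ) < 5/3) k
  positivity

lemma ee_le_one (k : ℕ) : ee k ≤ 1 := by
  unfold ee
  rw [div_le_one (pochR_pos (by norm_num) k)]
  exact pochR_mono (by norm_num) (by norm_num) k

lemma dd_nonneg (k : ℕ) : 0 ≤ dd k := by
  unfold dd
  have := pochR_pos (by norm_num : (0:ℝ) < (1:ℝ)) k
  have := pochR_pos (by norm_num : (0:ℝ) < (2:ℝ)) k
  have := pochR_pos (by norm_num : (0:ℝ) < 4/3) k
  have := pochR_pos (by norm_num : (0:ℝ) < 5/3) k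
  have := fact_pos' k
  positivity

lemma dd_eq (k : ℕ) : dd k = ee k / (k+1) := by
  unfold dd ee
  rw [pochR_one, pochR_two, Nat.factorial_succ]
  have h1 := fact_pos' k
  have h2 := pochR_pos (by norm_num : (0:ℝ) < 5/3) k
  have h3 : ((k:ℝ)+1) > 0 := by positivity
  field_simp
  push_cast
  ring

lemma dd_le_one (k : ℕ) : dd k ≤ 1 := by
  rw [dd_eq]
  have h := ee_le_one k
  have h0 := ee_nonneg k
  have : (0:ℝ) < (k:ℝ)+1 := by positivity
  rw [div_le_one this]
  nlinarith

/-- key identity 1: (k+1/3)·cc k = (1/3)·bb k -/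
lemma id_cc (k : ℕ) : ((k:ℝ) + 1/3) * cc k = (1/3) * bb k := by
  unfold cc bb
  have h13 : pochR (1/3) k * ((1:ℝ)/3 + k) = (1/3) * pochR (4/3) k := by
    have := pochR_shift (1/3) k
    rw [pochR_succ] at this
    norm_num at this ⊢
    linarith
  have h4 := (pochR_pos (by norm_num : (0:ℝ) < 4/3) k).ne'
  have hf := (fact_pos' k).ne'
  have step : ((k:ℝ) + 1/3) * (pochR (1/3) k * pochR (2/3) k / (pochR (4/3) k * (Nat.factorial k : ℝ)))
      = (pochR (1/3) k * ((1:ℝ)/3 + k)) * pochR (2/3) k / (pochR (4/3) k * (Nat.factorial k : ℝ)) := by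
    ring
  rw [step, h13]
  field_simp

/-- key identity 2: (k+1)·bb (k+1) = (k+2/3)·bb k -/
lemma id_bb (k : ℕ) : ((k:ℝ) + 1) * bb (k+1) = ((k:ℝ) + 2/3) * bb k := by
  unfold bb
  rw [pochR_succ, Nat.factorial_succ]
  have hf := fact_pos' k
  push_cast
  field_simp
  ring

/-- key identity 3: (k+5/3)·ee (k+1) = (k+4/3)·ee k -/
lemma id_ee (k : ℕ) : ((k:ℝ) + 5/3) * ee (k+1) = ((k:ℝ) + 4/3) * ee k := by
  unfold ee
  rw [pochR_succ, pochR_succ]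
  have h4 := pochR_pos (by norm_num : (0:ℝ) < 4/3) k
  have h5 := pochR_pos (by norm_num : (0:ℝ) < 5/3) k
  have h5k : (0:ℝ) < 5/3 + k := by positivity
  field_simp
  ring

/-- key identity 4: (k+1)·dd k = ee k -/
lemma id_dd (k : ℕ) : ((k:ℝ) + 1) * dd k = ee k := by
  rw [dd_eq]
  field_simp
section Series
variable {a : ℕ → ℝ}

lemma summable_coef_pow (ha : ∀ k, |a k| ≤ 1) {z : ℝ} (hz : |z| < 1) :
    Summable fun k => a k * z ^ k := by
  apply Summable.of_norm_bounded (summable_geometric_of_lt_one (abs_nonneg z) hz)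
  intro k
  rw [norm_mul, norm_pow, Real.norm_eq_abs, Real.norm_eq_abs]
  calc |a k| * |z| ^ k ≤ 1 * |z| ^ k := by
        apply mul_le_mul_of_nonneg_right (ha k) (by positivity)
    _ = |z| ^ k := one_mul _

lemma summable_linear_geometric {r : ℝ} (hr0 : 0 < r) (hr1 : r < 1) :
    Summable fun k : ℕ => (k : ℝ) * r ^ (k - 1) := by
  rw [← summable_nat_add_iff 1]
  have h1 : Summable fun k : ℕ => (k : ℝ) ^ 1 * r ^ k := by
    apply summable_pow_mul_geometric_of_norm_lt_one
    rwa [Real.norm_eq_abs, abs_of_pos hr0]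
  have h2 : Summable fun k : ℕ => r ^ k :=
    summable_geometric_of_lt_one hr0.le hr1
  have := h1.add h2
  apply this.congr
  intro k
  push_cast
  simp [pow_one]
  ring

lemma deriv_term_bound {y r : ℝ} (ha : ∀ k, |a k| ≤ 1) (hy : |y| ≤ r) (n : ℕ) :
    ‖a n * ((n : ℝ) * y ^ (n - 1))‖ ≤ (n : ℝ) * r ^ (n - 1) := by
  have hr0 : 0 ≤ r := le_trans (abs_nonneg y) hy
  rw [Real.norm_eq_abs, abs_mul, abs_mul, abs_pow, Nat.abs_cast]
  have h1 : |y| ^ (n-1) ≤ r ^ (n-1) := pow_le_pow_left₀ (abs_nonneg y) hy _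
  calc |a n| * ((n:ℝ) * |y| ^ (n-1)) ≤ 1 * ((n:ℝ) * r ^ (n-1)) := by
        apply mul_le_mul (ha n) (mul_le_mul_of_nonneg_left h1 (Nat.cast_nonneg n)) (by positivity)
          (by norm_num)
    _ = (n:ℝ) * r ^ (n-1) := one_mul _

lemma summable_deriv_coef (ha : ∀ k, |a k| ≤ 1) {z : ℝ} (hz : |z| < 1) :
    Summable fun k => a k * ((k : ℝ) * z ^ (k - 1)) := by
  set r : ℝ := (|z| + 1) / 2 with hr
  have hzr : |z| ≤ r := by rw [hr]; linarith
  have hr0 : 0 < r := lt_of_le_of_lt (abs_nonneg z) (by rw [hr]; linarith)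
  have hr1 : r < 1 := by rw [hr]; linarith
  exact Summable.of_norm_bounded (summable_linear_geometric hr0 hr1)
    (deriv_term_bound ha hzr)

lemma hasDerivAt_S (ha : ∀ k, |a k| ≤ 1) {z : ℝ} (hz : |z| < 1) :
    HasDerivAt (fun x => ∑' k, a k * x ^ k) (∑' k, a k * ((k : ℝ) * z ^ (k - 1))) z := by
  set r : ℝ := (|z| + 1) / 2 with hr
  have hzr : |z| < r := by rw [hr]; linarith
  have hr0 : 0 < r := lt_of_le_of_lt (abs_nonneg z) hzr
  have hr1 : r < 1 := by rw [hr]; linarith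
  apply hasDerivAt_tsum_of_isPreconnected (u := fun k : ℕ => (k : ℝ) * r ^ (k - 1))
    (summable_linear_geometric hr0 hr1) Metric.isOpen_ball
    ((convex_ball (0:ℝ) r).isPreconnected) (g' := fun n y => a n * ((n : ℝ) * y ^ (n - 1)))
  · intro n y _
    exact (hasDerivAt_pow n y).const_mul (a n)
  · intro n y hy
    rw [Metric.mem_ball, Real.dist_eq, sub_zero] at hy
    exact deriv_term_bound ha hy.le n
  · rw [Metric.mem_ball, Real.dist_eq, sub_zero, abs_zero]; exact hr0
  · apply summable_of_ne_finset_zero (s := {0})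
    intro n hn
    simp only [Finset.mem_singleton] at hn
    rw [zero_pow hn, mul_zero]
  · rwa [Metric.mem_ball, Real.dist_eq, sub_zero]

end Series

section Series2
variable {a : ℕ → ℝ}

lemma summable_k_coef (ha : ∀ k, |a k| ≤ 1) {z : ℝ} (hz : |z| < 1) :
    Summable fun k => a k * ((k : ℝ) * z ^ k) := by
  apply Summable.of_norm_bounded (g := fun k : ℕ => (k : ℝ) ^ 1 * |z| ^ k)
  · apply summable_pow_mul_geometric_of_norm_lt_one
    rwa [Real.norm_eq_abs, abs_abs]
  · intro k
    rw [Real.norm_eq_abs, abs_mul, abs_mul, abs_pow, Nat.abs_cast, pow_one]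
    calc |a k| * ((k:ℝ) * |z| ^ k) ≤ 1 * ((k:ℝ) * |z| ^ k) := by
          apply mul_le_mul_of_nonneg_right (ha k) (by positivity)
      _ = (k:ℝ) * |z| ^ k := one_mul _

lemma zmul_tsum_deriv (ha : ∀ k, |a k| ≤ 1) {z : ℝ} (hz : |z| < 1) :
    z * (∑' k, a k * ((k:ℝ) * z ^ (k-1))) = ∑' k, a k * ((k:ℝ) * z ^ k) := by
  rw [← tsum_mul_left]
  apply tsum_congr
  intro k
  match k with
  | 0 => simp
  | (n+1) =>
      have h : (n + 1 - 1 : ℕ) = n := rfl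
      rw [h]
      push_cast
      ring

lemma summable_shift_deriv (ha : ∀ k, |a k| ≤ 1) {z : ℝ} (hz : |z| < 1) :
    Summable fun k => a (k+1) * (((k:ℝ)+1) * z ^ k) := by
  apply ((summable_nat_add_iff 1).mpr (summable_deriv_coef ha hz)).congr
  intro k
  have h : (k + 1 - 1 : ℕ) = k := rfl
  rw [h]
  push_cast
  ring

lemma tsum_deriv_shift (ha : ∀ k, |a k| ≤ 1) {z : ℝ} (hz : |z| < 1) :
    (∑' k, a k * ((k:ℝ) * z ^ (k-1))) = ∑' k, a (k+1) * (((k:ℝ)+1) * z ^ k) := by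
  rw [Summable.tsum_eq_zero_add (summable_deriv_coef ha hz)]
  simp only [Nat.cast_zero, zero_mul, mul_zero, zero_add]
  apply tsum_congr
  intro k
  have h : (k + 1 - 1 : ℕ) = k := rfl
  rw [h]
  push_cast
  ring

/-- |∑' a_k z^k| ≤ 2 when |a_k| ≤ 1, |z| ≤ 1/2 -/
lemma abs_S_le_two (ha : ∀ k, |a k| ≤ 1) {z : ℝ} (hz : |z| ≤ 1/2) :
    |∑' k, a k * z ^ k| ≤ 2 := by
  have hb : ∀ k : ℕ, ‖a k * z ^ k‖ ≤ ((1:ℝ)/2) ^ k := by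
    intro k
    rw [Real.norm_eq_abs, abs_mul, abs_pow]
    calc |a k| * |z| ^ k ≤ 1 * ((1:ℝ)/2) ^ k := by
          apply mul_le_mul (ha k) (pow_le_pow_left₀ (abs_nonneg z) hz k) (by positivity)
            (by norm_num)
      _ = ((1:ℝ)/2) ^ k := one_mul _
  calc |∑' k, a k * z ^ k| ≤ ∑' k : ℕ, ((1:ℝ)/2) ^ k := by
        apply tsum_of_norm_bounded
          (summable_geometric_of_lt_one (by norm_num) (by norm_num)).hasSum hb
    _ = 2 := by rw [tsum_geometric_of_lt_one (by norm_num) (by norm_num)]; norm_num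

end Series2

/-- constancy from zero derivative on an open convex set -/
lemma const_of_hasDerivAt_zero {s : Set ℝ} (hs : Convex ℝ s) (ho : IsOpen s) {F : ℝ → ℝ}
    (h : ∀ x ∈ s, HasDerivAt F 0 x) {x y : ℝ} (hx : x ∈ s) (hy : y ∈ s) : F x = F y := by
  apply hs.is_const_of_fderivWithin_eq_zero
    (fun x hx => ((h x hx).differentiableAt).differentiableWithinAt) ?_ hx hy
  intro u hu
  rw [fderivWithin_of_isOpen ho hu, (h u hu).hasFDerivAt.fderiv]
  ext v
  simp

/-! ### The four series functions -/

noncomputable def fS (z : ℝ) : ℝ := ∑' k, cc k * z ^ k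
noncomputable def gS (z : ℝ) : ℝ := ∑' k, bb k * z ^ k
noncomputable def hS (z : ℝ) : ℝ := ∑' k, ee k * z ^ k
noncomputable def wS (z : ℝ) : ℝ := ∑' k, dd k * z ^ k

noncomputable def DfS (z : ℝ) : ℝ := ∑' k, cc k * ((k:ℝ) * z ^ (k-1))
noncomputable def DgS (z : ℝ) : ℝ := ∑' k, bb k * ((k:ℝ) * z ^ (k-1))
noncomputable def DhS (z : ℝ) : ℝ := ∑' k, ee k * ((k:ℝ) * z ^ (k-1))
noncomputable def DwS (z : ℝ) : ℝ := ∑' k, dd k * ((k:ℝ) * z ^ (k-1))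

lemma cc_abs (k : ℕ) : |cc k| ≤ 1 := by rw [abs_of_nonneg (cc_nonneg k)]; exact cc_le_one k
lemma bb_abs (k : ℕ) : |bb k| ≤ 1 := by rw [abs_of_nonneg (bb_nonneg k)]; exact bb_le_one k
lemma ee_abs (k : ℕ) : |ee k| ≤ 1 := by rw [abs_of_nonneg (ee_nonneg k)]; exact ee_le_one k
lemma dd_abs (k : ℕ) : |dd k| ≤ 1 := by rw [abs_of_nonneg (dd_nonneg k)]; exact dd_le_one k

lemma hasDerivAt_fS {z : ℝ} (hz : |z| < 1) : HasDerivAt fS (DfS z) z := hasDerivAt_S cc_abs hz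
lemma hasDerivAt_gS {z : ℝ} (hz : |z| < 1) : HasDerivAt gS (DgS z) z := hasDerivAt_S bb_abs hz
lemma hasDerivAt_hS {z : ℝ} (hz : |z| < 1) : HasDerivAt hS (DhS z) z := hasDerivAt_S ee_abs hz
lemma hasDerivAt_wS {z : ℝ} (hz : |z| < 1) : HasDerivAt wS (DwS z) z := hasDerivAt_S dd_abs hz

/-! ### Series identities -/

/-- identity A : (1/3)·f + z·f' = (1/3)·g -/
lemma idA {z : ℝ} (hz : |z| < 1) : (1/3) * fS z + z * DfS z = (1/3) * gS z := by
  unfold DfS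
  rw [zmul_tsum_deriv cc_abs hz]
  unfold fS gS
  rw [← tsum_mul_left, ← tsum_mul_left,
    ← Summable.tsum_add ((summable_coef_pow cc_abs hz).mul_left _) (summable_k_coef cc_abs hz)]
  apply tsum_congr
  intro k
  linear_combination (z ^ k) * id_cc k

/-- identity B : (1-z)·g' = (2/3)·g -/
lemma idB {z : ℝ} (hz : |z| < 1) : (1 - z) * DgS z = (2/3) * gS z := by
  rw [sub_mul, one_mul]
  unfold DgS
  rw [zmul_tsum_deriv bb_abs hz, tsum_deriv_shift bb_abs hz]
  unfold gS
  rw [← tsum_mul_left,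
    ← Summable.tsum_sub (summable_shift_deriv bb_abs hz) (summable_k_coef bb_abs hz)]
  apply tsum_congr
  intro k
  linear_combination (z ^ k) * id_bb k

lemma ee_zero : ee 0 = 1 := by unfold ee; rw [pochR_zero, pochR_zero]; norm_num

/-- identity D : (2/3)·H + z·H' = 2/3 + z·((4/3)·H + z·H') -/
lemma idD {z : ℝ} (hz : |z| < 1) :
    (2/3) * hS z + z * DhS z = 2/3 + z * ((4/3) * hS z + z * DhS z) := by
  have h2 : Summable fun k => ee k * ((k:ℝ) * z ^ k) := summable_k_coef ee_abs hz
  have h3 : Summable fun k => ee k * z ^ k := summable_coef_pow ee_abs hz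
  unfold DhS
  rw [zmul_tsum_deriv ee_abs hz]
  unfold hS
  rw [← tsum_mul_left (a := (2/3:ℝ)), ← tsum_mul_left (a := (4/3:ℝ)),
    ← Summable.tsum_add (h3.mul_left _) h2, ← Summable.tsum_add (h3.mul_left _) h2, ← tsum_mul_left (a := z),
    Summable.tsum_eq_zero_add ((h3.mul_left (2/3:ℝ)).add h2)]
  congr 1
  · rw [ee_zero]; norm_num
  · apply tsum_congr
    intro k
    push_cast
    linear_combination (z ^ (k+1)) * id_ee k

/-! ### Closed form for the binomial series, and function-level derivatives -/

lemma gS_zero : gS 0 = 1 := by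
  unfold gS
  rw [tsum_eq_single 0 (fun k hk => by rw [zero_pow hk, mul_zero])]
  unfold bb
  rw [pochR_zero]
  norm_num

lemma gS_eq {z : ℝ} (hz : z ∈ Set.Ioo (-1:ℝ) 1) : gS z = (1-z) ^ (-(2:ℝ)/3) := by
  have hq : ∀ x ∈ Set.Ioo (-1:ℝ) 1,
      HasDerivAt (fun x : ℝ => (1-x) ^ ((2:ℝ)/3) * gS x) 0 x := by
    intro x hx
    have hx1 : (0:ℝ) < 1 - x := by linarith [hx.2]
    have habs : |x| < 1 := abs_lt.mpr ⟨hx.1, hx.2⟩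
    have hbase : HasDerivAt (fun y : ℝ => 1 - y) (-1) x := by
      simpa using (hasDerivAt_id x).const_sub 1
    have hd1 := hbase.rpow_const (p := (2:ℝ)/3) (Or.inl hx1.ne')
    have hd := hd1.mul (hasDerivAt_gS habs)
    refine hd.congr_deriv ?_
    symm
    have hsplit : (1-x) ^ ((2:ℝ)/3) = (1-x) ^ ((2:ℝ)/3 - 1) * (1-x) := by
      have h23 : (2:ℝ)/3 - 1 + 1 = 2/3 := by ring
      rw [← h23, Real.rpow_add hx1, Real.rpow_one, h23]
    rw [hsplit]
    linear_combination (-((1-x) ^ ((2:ℝ)/3 - 1))) * idB habs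
  have hconst := const_of_hasDerivAt_zero (convex_Ioo _ _) isOpen_Ioo hq hz
    (Set.mem_Ioo.mpr ⟨by norm_num, by norm_num⟩ : (0:ℝ) ∈ Set.Ioo (-1:ℝ) 1)
  have h1z : (0:ℝ) < 1 - z := by linarith [hz.2]
  rw [sub_zero, Real.one_rpow, gS_zero, mul_one] at hconst
  have hpow : (0:ℝ) < (1-z) ^ ((2:ℝ)/3) := Real.rpow_pos_of_pos h1z _
  have hneg : (1-z) ^ (-(2:ℝ)/3) = ((1-z) ^ ((2:ℝ)/3))⁻¹ := by
    rw [show -(2:ℝ)/3 = -((2:ℝ)/3) by ring, Real.rpow_neg h1z.le]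
  rw [hneg]
  field_simp
  linarith [hconst]

/-- `Ph'(z) = (C0/3)·z^(-2/3)·(1-z)^(-2/3)` -/
noncomputable def C0 : ℝ := 3 * Real.Gamma (2/3) / (Real.Gamma (1/3)) ^ 2

lemma C0_pos : 0 < C0 := by
  unfold C0
  have h1 := Real.Gamma_pos_of_pos (by norm_num : (0:ℝ) < 2/3)
  have h2 := Real.Gamma_pos_of_pos (by norm_num : (0:ℝ) < 1/3)
  positivity

lemma Ph_eq (z : ℝ) : Ph z = C0 * z ^ ((1:ℝ)/3) * fS z := rfl

lemma hasDerivAt_Ph {z : ℝ} (hz : z ∈ Set.Ioo (0:ℝ) 1) :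
    HasDerivAt Ph (C0/3 * (z ^ (-(2:ℝ)/3) * (1-z) ^ (-(2:ℝ)/3))) z := by
  have hz0 := hz.1
  have habs : |z| < 1 := abs_lt.mpr ⟨by linarith [hz.1], hz.2⟩
  have hd1 : HasDerivAt (fun y : ℝ => C0 * y ^ ((1:ℝ)/3))
      (C0 * ((1:ℝ)/3 * z ^ ((1:ℝ)/3 - 1))) z :=
    (Real.hasDerivAt_rpow_const (Or.inl hz0.ne')).const_mul C0
  have hd := hd1.mul (hasDerivAt_fS habs)
  have hPh : Ph = fun y => (C0 * y ^ ((1:ℝ)/3)) * fS y := rfl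
  rw [hPh]
  refine hd.congr_deriv ?_
  symm
  have hexp : (1:ℝ)/3 - 1 = -(2:ℝ)/3 := by norm_num
  have hsplit : z ^ ((1:ℝ)/3) = z ^ (-(2:ℝ)/3) * z := by
    have h13 : -(2:ℝ)/3 + 1 = 1/3 := by norm_num
    rw [← h13, Real.rpow_add hz0, Real.rpow_one]
  rw [hexp, hsplit]
  have hgz : gS z = (1-z) ^ (-(2:ℝ)/3) := gS_eq ⟨by linarith [hz.1], hz.2⟩
  rw [← hgz]
  linear_combination (-(C0 * z ^ (-(2:ℝ)/3))) * idA habs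

/-- `G(z) = z·₃F₂(...)(z)`, with `G' = hS` -/
noncomputable def Gf (z : ℝ) : ℝ := z * wS z

lemma hasDerivAt_Gf {z : ℝ} (hz : |z| < 1) : HasDerivAt Gf (hS z) z := by
  have hd := (hasDerivAt_id z).mul (hasDerivAt_wS hz)
  have hGf : Gf = fun y => id y * wS y := rfl
  rw [hGf]
  refine hd.congr_deriv ?_
  symm
  simp only [id]
  rw [one_mul]
  unfold DwS
  rw [zmul_tsum_deriv dd_abs hz]
  unfold wS hS
  rw [← Summable.tsum_add (summable_coef_pow dd_abs hz) (summable_k_coef dd_abs hz)]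
  apply tsum_congr
  intro k
  linear_combination (-(z ^ k)) * id_dd k

/-- `p(z) = z^(2/3)·(1-z)^(2/3)·H(z)` with `p' = (2/3)·z^(-1/3)(1-z)^(-1/3)` -/
noncomputable def pf (z : ℝ) : ℝ := z ^ ((2:ℝ)/3) * (1-z) ^ ((2:ℝ)/3) * hS z

lemma hasDerivAt_pf {z : ℝ} (hz : z ∈ Set.Ioo (0:ℝ) 1) :
    HasDerivAt pf ((2:ℝ)/3 * (z ^ (-(1:ℝ)/3) * (1-z) ^ (-(1:ℝ)/3))) z := by
  have hz0 := hz.1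
  have hz1 : (0:ℝ) < 1 - z := by linarith [hz.2]
  have habs : |z| < 1 := abs_lt.mpr ⟨by linarith [hz.1], hz.2⟩
  have hd1 : HasDerivAt (fun y : ℝ => y ^ ((2:ℝ)/3)) ((2:ℝ)/3 * z ^ ((2:ℝ)/3 - 1)) z :=
    Real.hasDerivAt_rpow_const (Or.inl hz0.ne')
  have hbase : HasDerivAt (fun y : ℝ => 1 - y) (-1) z := by
    simpa using (hasDerivAt_id z).const_sub 1
  have hd2 := hbase.rpow_const (p := (2:ℝ)/3) (Or.inl hz1.ne')
  have hd := (hd1.mul hd2).mul (hasDerivAt_hS habs)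
  refine hd.congr_deriv ?_
  symm
  have hexp : (2:ℝ)/3 - 1 = -(1:ℝ)/3 := by norm_num
  have hsplit1 : z ^ ((2:ℝ)/3) = z ^ (-(1:ℝ)/3) * z := by
    have h : -(1:ℝ)/3 + 1 = 2/3 := by norm_num
    rw [← h, Real.rpow_add hz0, Real.rpow_one]
  have hsplit2 : (1-z) ^ ((2:ℝ)/3) = (1-z) ^ (-(1:ℝ)/3) * (1-z) := by
    have h : -(1:ℝ)/3 + 1 = 2/3 := by norm_num
    rw [← h, Real.rpow_add hz1, Real.rpow_one]
  simp only [Pi.mul_apply]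
  rw [hexp, hsplit1, hsplit2]
  linear_combination (-(z ^ (-(1:ℝ)/3) * (1-z) ^ (-(1:ℝ)/3))) * idD habs

/-! ### Beta integral and the symmetric-sum evaluation -/

section Beta
open MeasureTheory

/-- the beta-type integrand -/
noncomputable def hfun (a : ℝ) : ℝ → ℝ := fun t => t ^ (a-1) * (1-t) ^ (a-1)

lemma hfun_sym (a x : ℝ) : hfun a (1-x) = hfun a x := by
  unfold hfun; rw [sub_sub_cancel]; ring

lemma hfun_intervalIntegrable {a : ℝ} (ha : 0 < a) :
    IntervalIntegrable (hfun a) MeasureTheory.volume 0 1 := by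
  have ha' : 0 < Complex.re (a:ℂ) := by simpa using ha
  have hc := Complex.betaIntegral_convergent ha' ha'
  rw [intervalIntegrable_iff_integrableOn_Ioc_of_le (by norm_num : (0:ℝ) ≤ 1)] at hc ⊢
  have hre := hc.re
  apply (MeasureTheory.IntegrableOn.congr_fun hre ?_ measurableSet_Ioc)
  intro x hx
  have hx0 : (0:ℝ) ≤ x := hx.1.le
  have hx1 : (0:ℝ) ≤ 1 - x := by linarith [hx.2]
  simp only [hfun]
  have e1 : ((a:ℂ) - 1) = ((a - 1 : ℝ) : ℂ) := by push_cast; ring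
  have e2 : (1 : ℂ) - (x:ℂ) = ((1 - x : ℝ) : ℂ) := by push_cast; ring
  rw [e1, e2, ← Complex.ofReal_cpow hx0, ← Complex.ofReal_cpow hx1, ← Complex.ofReal_mul]
  simp

lemma integral_hfun {a : ℝ} (ha : 0 < a) :
    ∫ t in (0:ℝ)..1, hfun a t = Real.Gamma a ^ 2 / Real.Gamma (2*a) := by
  have ha' : 0 < Complex.re (a:ℂ) := by simpa using ha
  have key := Complex.Gamma_mul_Gamma_eq_betaIntegral ha' ha'
  have hbeta : Complex.betaIntegral (a:ℂ) (a:ℂ) = ((∫ t in (0:ℝ)..1, hfun a t : ℝ) : ℂ) := by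
    unfold Complex.betaIntegral
    rw [← intervalIntegral.integral_ofReal]
    apply intervalIntegral.integral_congr
    intro x hx
    rw [Set.uIcc_of_le (by norm_num : (0:ℝ) ≤ 1)] at hx
    have hx0 : (0:ℝ) ≤ x := hx.1
    have hx1 : (0:ℝ) ≤ 1 - x := by linarith [hx.2]
    simp only [hfun]
    have e1 : ((a:ℂ) - 1) = ((a - 1 : ℝ) : ℂ) := by push_cast; ring
    have e2 : (1 : ℂ) - (x:ℂ) = ((1 - x : ℝ) : ℂ) := by push_cast; ring
    rw [e1, e2, ← Complex.ofReal_cpow hx0, ← Complex.ofReal_cpow hx1, ← Complex.ofReal_mul]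
  rw [hbeta] at key
  have h2a : ((a:ℂ) + (a:ℂ)) = ((2*a : ℝ) : ℂ) := by push_cast; ring
  rw [h2a, Complex.Gamma_ofReal, Complex.Gamma_ofReal, ← Complex.ofReal_mul,
    ← Complex.ofReal_mul] at key
  have key2 : Real.Gamma a * Real.Gamma a = Real.Gamma (2*a) * ∫ t in (0:ℝ)..1, hfun a t :=
    Complex.ofReal_inj.mp key
  have hΓ : (0:ℝ) < Real.Gamma (2*a) := Real.Gamma_pos_of_pos (by linarith)
  field_simp
  linear_combination (-1) * key2

/-- main evaluation: a function on (0,1) with derivative `hfun a` vanishing at `0+`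
has symmetric sum equal to the Beta value. -/
lemma beta_primitive {a : ℝ} (ha0 : 0 < a) (F : ℝ → ℝ)
    (hF : ∀ z ∈ Set.Ioo (0:ℝ) 1, HasDerivAt F (hfun a z) z)
    (hF0 : Filter.Tendsto F (nhdsWithin 0 (Set.Ioi (0:ℝ))) (nhds 0)) :
    ∀ z ∈ Set.Ioo (0:ℝ) 1, F z + F (1-z) = Real.Gamma a ^ 2 / Real.Gamma (2*a) := by
  have hInt : IntervalIntegrable (hfun a) volume 0 1 := hfun_intervalIntegrable ha0
  set P : ℝ → ℝ := fun z => ∫ t in (0:ℝ)..z, hfun a t with hPdef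
  have hsub : ∀ z ∈ Set.Ioo (0:ℝ) 1, IntervalIntegrable (hfun a) volume 0 z := by
    intro z hz
    apply hInt.mono_set
    rw [Set.uIcc_of_le (by norm_num : (0:ℝ) ≤ 1), Set.uIcc_of_le hz.1.le]
    exact Set.Icc_subset_Icc le_rfl hz.2.le
  have hcont_h : ContinuousOn (hfun a) (Set.Ioo (0:ℝ) 1) := by
    intro x hx
    apply ContinuousAt.continuousWithinAt
    apply ContinuousAt.mul
    · exact Real.continuousAt_rpow_const x _ (Or.inl hx.1.ne')
    · have h1 : ContinuousAt (fun t : ℝ => 1 - t) x := (continuousAt_const.sub continuousAt_id)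
      have h2 : ContinuousAt (fun s : ℝ => s ^ (a-1)) (1-x) :=
        Real.continuousAt_rpow_const (1-x) _ (Or.inl (ne_of_gt (by linarith [hx.2])))
      exact h2.comp h1
  have hPderiv : ∀ z ∈ Set.Ioo (0:ℝ) 1, HasDerivAt P (hfun a z) z := by
    intro z hz
    exact intervalIntegral.integral_hasDerivAt_right (hsub z hz)
      (hcont_h.stronglyMeasurableAtFilter isOpen_Ioo z hz)
      (hcont_h.continuousAt (isOpen_Ioo.mem_nhds hz))
  have hP0 : Filter.Tendsto P (nhdsWithin 0 (Set.Ioo (0:ℝ) 1)) (nhds 0) := by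
    have hcw : ContinuousWithinAt P (Set.Icc (0:ℝ) 1) 0 := by
      apply intervalIntegral.continuousWithinAt_primitive (by simp)
      simpa using hInt
    have hP00 : P 0 = 0 := intervalIntegral.integral_same
    have := hcw.tendsto
    rw [hP00] at this
    exact this.mono_left (nhdsWithin_mono _ Set.Ioo_subset_Icc_self)
  have hD : ∀ x ∈ Set.Ioo (0:ℝ) 1, HasDerivAt (fun y => F y - P y) 0 x := by
    intro x hx
    exact ((hF x hx).sub (hPderiv x hx)).congr_deriv (sub_self _)
  have hFP : ∀ x ∈ Set.Ioo (0:ℝ) 1, F x - P x = F (1/2) - P (1/2) := fun x hx =>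
    const_of_hasDerivAt_zero (convex_Ioo _ _) isOpen_Ioo hD hx (by norm_num)
  have hlrw : nhdsWithin (0:ℝ) (Set.Ioo (0:ℝ) 1) = nhdsWithin 0 (Set.Ioi (0:ℝ)) := by
    rw [show Set.Ioo (0:ℝ) 1 = Set.Ioi 0 ∩ Set.Iio 1 from (Set.Ioi_inter_Iio).symm]
    apply nhdsWithin_inter_of_mem'
    exact mem_nhdsWithin_of_mem_nhds (Iio_mem_nhds (by norm_num))
  have hlne : (nhdsWithin (0:ℝ) (Set.Ioo (0:ℝ) 1)).NeBot := by rw [hlrw]; infer_instance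
  have hc0 : F (1/2) - P (1/2) = 0 := by
    have ht : Filter.Tendsto (fun y => F y - P y) (nhdsWithin (0:ℝ) (Set.Ioo (0:ℝ) 1))
        (nhds (F (1/2) - P (1/2))) := by
      apply Filter.Tendsto.congr' _ tendsto_const_nhds
      filter_upwards [self_mem_nhdsWithin] with y hy
      exact (hFP y hy).symm
    have ht2 : Filter.Tendsto (fun y => F y - P y) (nhdsWithin (0:ℝ) (Set.Ioo (0:ℝ) 1))
        (nhds 0) := by
      have hF0' := hF0.mono_left (le_of_eq hlrw)
      simpa using hF0'.sub hP0
    exact tendsto_nhds_unique ht ht2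
  intro z hz
  have hz1 : 1 - z ∈ Set.Ioo (0:ℝ) 1 := ⟨by linarith [hz.2], by linarith [hz.1]⟩
  have e1 : F z = P z := by have h := hFP z hz; rw [hc0] at h; linarith
  have e2 : F (1-z) = P (1-z) := by have h := hFP _ hz1; rw [hc0] at h; linarith
  rw [e1, e2]
  have hrefl : ∫ t in (0:ℝ)..(1-z), hfun a t = ∫ t in z..1, hfun a t := by
    have hcs := intervalIntegral.integral_comp_sub_left (a := z) (b := 1) (hfun a) 1
    rw [show (1:ℝ)-1 = 0 by norm_num] at hcs
    rw [← hcs]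
    apply intervalIntegral.integral_congr
    intro x _
    exact hfun_sym a x
  have hi2 : IntervalIntegrable (hfun a) volume z 1 := by
    apply hInt.mono_set
    rw [Set.uIcc_of_le (by norm_num : (0:ℝ) ≤ 1), Set.uIcc_of_le hz.2.le]
    exact Set.Icc_subset_Icc hz.1.le le_rfl
  show P z + (∫ t in (0:ℝ)..(1-z), hfun a t) = _
  rw [hrefl, hPdef]
  rw [intervalIntegral.integral_add_adjacent_intervals (hsub z hz) hi2]
  exact integral_hfun ha0

end Beta

/-! ### Endpoint limits -/

open Filter in
lemma tendsto_rpow_zero (q : ℝ) (hq : 0 < q) :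
    Tendsto (fun z : ℝ => z ^ q) (nhdsWithin 0 (Set.Ioi (0:ℝ))) (nhds 0) := by
  have hc : ContinuousAt (fun z : ℝ => z ^ q) 0 :=
    Real.continuousAt_rpow_const 0 _ (Or.inr hq.le)
  have := hc.tendsto
  rw [Real.zero_rpow hq.ne'] at this
  exact this.mono_left nhdsWithin_le_nhds

open Filter in
lemma tendsto_Ph_zero : Tendsto Ph (nhdsWithin 0 (Set.Ioi (0:ℝ))) (nhds 0) := by
  have hC := C0_pos
  apply squeeze_zero' (g := fun z => (2*C0) * z ^ ((1:ℝ)/3))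
  · filter_upwards [Ioc_mem_nhdsGT (by norm_num : (0:ℝ) < 1/2)] with z hz
    rw [Ph_eq]
    have h1 : 0 ≤ fS z := tsum_nonneg fun k => mul_nonneg (cc_nonneg k) (pow_nonneg hz.1.le k)
    have h2 : 0 ≤ z ^ ((1:ℝ)/3) := Real.rpow_nonneg hz.1.le _
    positivity
  · filter_upwards [Ioc_mem_nhdsGT (by norm_num : (0:ℝ) < 1/2)] with z hz
    rw [Ph_eq]
    have hb : |fS z| ≤ 2 := abs_S_le_two cc_abs (by rw [abs_of_pos hz.1]; exact hz.2)
    have h2 : 0 ≤ z ^ ((1:ℝ)/3) := Real.rpow_nonneg hz.1.le _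
    calc C0 * z ^ ((1:ℝ)/3) * fS z ≤ C0 * z ^ ((1:ℝ)/3) * 2 := by
          apply mul_le_mul_of_nonneg_left (le_of_abs_le hb) (by positivity)
      _ = 2*C0 * z ^ ((1:ℝ)/3) := by ring
  · have := (tendsto_rpow_zero ((1:ℝ)/3) (by norm_num)).const_mul (2*C0)
    simpa using this

open Filter in
lemma tendsto_pf_zero : Tendsto pf (nhdsWithin 0 (Set.Ioi (0:ℝ))) (nhds 0) := by
  apply squeeze_zero' (g := fun z => 2 * z ^ ((2:ℝ)/3))
  · filter_upwards [Ioc_mem_nhdsGT (by norm_num : (0:ℝ) < 1/2)] with z hz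
    unfold pf
    have h1 : 0 ≤ hS z := tsum_nonneg fun k => mul_nonneg (ee_nonneg k) (pow_nonneg hz.1.le k)
    have h2 : 0 ≤ z ^ ((2:ℝ)/3) := Real.rpow_nonneg hz.1.le _
    have h3 : 0 ≤ (1-z) ^ ((2:ℝ)/3) := Real.rpow_nonneg (by linarith [hz.2] : (0:ℝ) ≤ 1-z) _
    exact mul_nonneg (mul_nonneg h2 h3) h1
  · filter_upwards [Ioc_mem_nhdsGT (by norm_num : (0:ℝ) < 1/2)] with z hz
    unfold pf
    have hb : |hS z| ≤ 2 := abs_S_le_two ee_abs (by rw [abs_of_pos hz.1]; exact hz.2)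
    have h2 : 0 ≤ z ^ ((2:ℝ)/3) := Real.rpow_nonneg hz.1.le _
    have h1z : (0:ℝ) ≤ 1 - z := by linarith [hz.2]
    have h3 : (1-z) ^ ((2:ℝ)/3) ≤ 1 :=
      Real.rpow_le_one h1z (by linarith [hz.1]) (by norm_num)
    have h3' : 0 ≤ (1-z) ^ ((2:ℝ)/3) := Real.rpow_nonneg h1z _
    have h1 : 0 ≤ hS z := tsum_nonneg fun k => mul_nonneg (ee_nonneg k) (pow_nonneg hz.1.le k)
    calc z ^ ((2:ℝ)/3) * (1-z) ^ ((2:ℝ)/3) * hS z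
        ≤ z ^ ((2:ℝ)/3) * 1 * 2 := by
          apply mul_le_mul (by nlinarith) (le_of_abs_le hb) h1 (by positivity)
      _ = 2 * z ^ ((2:ℝ)/3) := by ring
  · have := (tendsto_rpow_zero ((2:ℝ)/3) (by norm_num)).const_mul 2
    simpa using this

/-! ### The two symmetric-sum evaluations -/

lemma Ph_add {z : ℝ} (hz : z ∈ Set.Ioo (0:ℝ) 1) : Ph z + Ph (1-z) = 1 := by
  have happ := beta_primitive (by norm_num : (0:ℝ) < 1/3) (fun y => (3/C0) * Ph y) ?_ ?_ z hz
  · have h2a : (2:ℝ) * (1/3) = 2/3 := by norm_num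
    rw [h2a] at happ
    have hG1 := Real.Gamma_pos_of_pos (by norm_num : (0:ℝ) < 1/3)
    have hG2 := Real.Gamma_pos_of_pos (by norm_num : (0:ℝ) < 2/3)
    unfold C0 at happ
    field_simp at happ
    have h3 : (Ph z + Ph (1-z) - 1) * (3 * Real.Gamma (1/3)^2 * Real.Gamma (2/3)) = 0 := by
      linear_combination (3 * Real.Gamma (1/3)^2 * Real.Gamma (2/3)) * happ
    rcases mul_eq_zero.mp h3 with h | h
    · linarith
    · exfalso
      have hpos : (0:ℝ) < 3 * Real.Gamma (1/3)^2 * Real.Gamma (2/3) :=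
        mul_pos (mul_pos (by norm_num) (pow_pos hG1 2)) hG2
      linarith
  · intro y hy
    have hd := (hasDerivAt_Ph hy).const_mul (3/C0)
    refine hd.congr_deriv ?_
    symm
    unfold hfun
    rw [show (1:ℝ)/3 - 1 = -(2:ℝ)/3 by norm_num]
    field_simp [C0_pos.ne']
  · have := tendsto_Ph_zero.const_mul (3/C0)
    simpa using this

noncomputable def kap : ℝ := 2/3 * (Real.Gamma (2/3) ^ 2 / Real.Gamma (4/3))

lemma pf_add {z : ℝ} (hz : z ∈ Set.Ioo (0:ℝ) 1) : pf z + pf (1-z) = kap := by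
  have happ := beta_primitive (by norm_num : (0:ℝ) < 2/3) (fun y => (3/2) * pf y) ?_ ?_ z hz
  · have h2a : (2:ℝ) * (2/3) = 4/3 := by norm_num
    rw [h2a] at happ
    unfold kap
    linarith [happ]
  · intro y hy
    have hd := (hasDerivAt_pf hy).const_mul ((3:ℝ)/2)
    refine hd.congr_deriv ?_
    symm
    unfold hfun
    rw [show (2:ℝ)/3 - 1 = -(1:ℝ)/3 by norm_num]
    ring
  · have := tendsto_pf_zero.const_mul ((3:ℝ)/2)
    simpa using this

lemma hS_add {z : ℝ} (hz : z ∈ Set.Ioo (0:ℝ) 1) :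
    hS z + hS (1-z) = kap * (z ^ (-(2:ℝ)/3) * (1-z) ^ (-(2:ℝ)/3)) := by
  have hp := pf_add hz
  unfold pf at hp
  rw [sub_sub_cancel] at hp
  have hz0 := hz.1
  have hz1 : (0:ℝ) < 1-z := by linarith [hz.2]
  have hzz : z ^ ((2:ℝ)/3) * z ^ (-(2:ℝ)/3) = 1 := by
    rw [← Real.rpow_add hz0]
    norm_num
  have hzz1 : (1-z) ^ ((2:ℝ)/3) * (1-z) ^ (-(2:ℝ)/3) = 1 := by
    rw [← Real.rpow_add hz1]
    norm_num
  linear_combination (z ^ (-(2:ℝ)/3) * (1-z) ^ (-(2:ℝ)/3)) * hp -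
    ((hS z + hS (1-z)) * ((1-z) ^ ((2:ℝ)/3) * (1-z) ^ (-(2:ℝ)/3))) * hzz -
    (hS z + hS (1-z)) * hzz1

/-! ### Final assembly -/

noncomputable def s3 : ℝ := Real.sqrt 3 / (2 * Real.pi)

/-- the key constant identity `s3·κ = 2C0/3`, equivalent to Γ(1/3)Γ(2/3) = 2π/√3 -/
lemma s3_kap : s3 * kap = 2 * C0 / 3 := by
  unfold s3 kap C0
  have h43 : Real.Gamma (4/3) = (1/3) * Real.Gamma (1/3) := by
    rw [show (4:ℝ)/3 = 1/3 + 1 by norm_num, Real.Gamma_add_one (by norm_num)]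
  have hrefl := Real.Gamma_mul_Gamma_one_sub (1/3)
  rw [show (1:ℝ) - 1/3 = 2/3 by norm_num, show Real.pi * (1/3) = Real.pi / 3 by ring,
    Real.sin_pi_div_three] at hrefl
  have hG1 := Real.Gamma_pos_of_pos (by norm_num : (0:ℝ) < 1/3)
  have hG2 := Real.Gamma_pos_of_pos (by norm_num : (0:ℝ) < 2/3)
  have hpi := Real.pi_pos
  have hsqrt : (0:ℝ) < Real.sqrt 3 := Real.sqrt_pos.mpr (by norm_num)
  have hrefl' : Real.Gamma (1/3) * Real.Gamma (2/3) * Real.sqrt 3 = 2 * Real.pi := by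
    field_simp at hrefl
    linarith
  rw [h43]
  field_simp
  nlinarith [hrefl', sq_nonneg (Real.Gamma (1/3)), hG1, hG2, hsqrt, hpi]

noncomputable def Phif : ℝ → ℝ := fun z => 1 + s3 * (Gf z - Gf (1-z)) - 2 * Ph z

lemma hasDerivAt_Phif {z : ℝ} (hz : z ∈ Set.Ioo (0:ℝ) 1) : HasDerivAt Phif 0 z := by
  have hz1 : (0:ℝ) < 1 - z := by linarith [hz.2]
  have habs : |z| < 1 := abs_lt.mpr ⟨by linarith [hz.1], hz.2⟩
  have habs1 : |1-z| < 1 := abs_lt.mpr ⟨by linarith [hz.1], by linarith [hz.1]⟩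
  have hbase : HasDerivAt (fun y : ℝ => 1 - y) (-1) z := by
    simpa using (hasDerivAt_id z).const_sub 1
  have hG1 : HasDerivAt (fun y => Gf (1-y)) (hS (1-z) * (-1)) z :=
    (hasDerivAt_Gf habs1).comp z hbase
  have hd := ((((hasDerivAt_Gf habs).sub hG1).const_mul s3).const_add 1).sub
    ((hasDerivAt_Ph hz).const_mul 2)
  refine hd.congr_deriv ?_
  symm
  linear_combination (-s3) * hS_add hz - (z ^ (-(2:ℝ)/3) * (1-z) ^ (-(2:ℝ)/3)) * s3_kap

lemma Phif_zero {z : ℝ} (hz : z ∈ Set.Ioo (0:ℝ) 1) : Phif z = 0 := by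
  have hz1 : 1 - z ∈ Set.Ioo (0:ℝ) 1 := ⟨by linarith [hz.2], by linarith [hz.1]⟩
  have hhalf : (1/2 : ℝ) ∈ Set.Ioo (0:ℝ) 1 := by norm_num
  have hconst : ∀ x ∈ Set.Ioo (0:ℝ) 1, Phif x = Phif (1/2) := fun x hx =>
    const_of_hasDerivAt_zero (convex_Ioo _ _) isOpen_Ioo
      (fun y hy => hasDerivAt_Phif hy) hx hhalf
  have hsum : Phif z + Phif (1-z) = 0 := by
    unfold Phif
    rw [sub_sub_cancel]
    have := Ph_add hz
    linear_combination (-2) * this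
  have h1 := hconst z hz
  have h2 := hconst _ hz1
  rw [h1, h2] at hsum
  rw [h1]
  linarith

end Aux1

/-- `2𝔑_h(z) − 𝔓_h(z) − 𝔓_hv(z) = (√3/2π)·log(1/(1−z))` for `z ∈ (0,1)`. -/
theorem stmt1 (z : ℝ) (hz : z ∈ Set.Ioo (0:ℝ) 1) :
    2 * Nh z - Ph z - Phv z = Real.sqrt 3 / (2 * Real.pi) * Real.log (1 / (1 - z)) := by
  have hPhi := Aux1.Phif_zero hz
  unfold Aux1.Phif Aux1.s3 at hPhi
  have hGf : ∀ u : ℝ, Aux1.Gf u = u * F32R 1 1 (4/3) 2 (5/3) u := fun _ => rfl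
  rw [hGf, hGf] at hPhi
  unfold Nh Phv
  rw [show (1:ℝ)/(1-z) = (1-z)⁻¹ from one_div _, Real.log_inv]
  linear_combination hPhi
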